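/- Node-Kayles reduces to Friend Circle: let G₀ = (V₀, E₀) be a finite simple graph, and build the Friend Circle position (G, S, w) where G has vertex set V₀ together with a new vertex t_v for each v ∈ V₀, edge set E₀ together with the edges (v, t_v) for each v ∈ V₀, labels w(e) = true for e ∈ E₀ and w((v, t_v)) = false for all v ∈ V₀, and seed set S = V₀. Then Friend Circle on (G, S, w) is isomorphic (as a game tree, via the move correspondence v ↔ v) to Node-Kayles on G₀; in particular the first player wins Friend Circle on (G, S, w) if and only if the first player wins Node-Kayles on G₀. -/

import Mathlib

open scoped Classical

noncomputable section

namespace TW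

variable {ι κ : Type*}

/-- A column `j` of a Crosswise AND position is feasible if it contains a `true` (green) entry. -/
def Feasible (B : ι → κ → Bool) (j : κ) : Prop := ∃ i, B i j = true

/-- The Crosswise AND move at column `j`: if `B i j = false` then row `i` becomes all false;
otherwise row `i` is unchanged except that entry `(i, j)` becomes false. -/
def move (B : ι → κ → Bool) (j : κ) : ι → κ → Bool :=
  fun i j' => if B i j = false then false else if j' = j then false else B i j'

/-- A vertex `v` is a feasible Friend Circle move for position `(G, S, w)` if `v` is a
seed and some edge of `G` incident to `v` is labelled false. -/
def fcFeasible {V : Type*} (G : SimpleGraph V) (S : Finset V) (w : Sym2 V → Bool)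
    (v : V) : Prop :=
  v ∈ S ∧ ∃ x, G.Adj v x ∧ w s(v, x) = false

/-- The Friend Circle move at `v`: every edge incident to `v` becomes true, and every
edge incident to a neighbour `x` of `v` whose edge `(v, x)` was already true becomes
true; all other edge labels are unchanged (labels of non-edges are never changed). -/
def fcMove {V : Type*} (G : SimpleGraph V) (w : Sym2 V → Bool) (v : V) :
    Sym2 V → Bool :=
  fun e =>
    if e ∈ G.edgeSet ∧ (v ∈ e ∨ ∃ x ∈ e, G.Adj v x ∧ w s(v, x) = true) then true
    else w e

/-- The set of false-labelled edges of `G`. -/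
def falseEdges {V : Type*} [Fintype V] [DecidableEq V] (G : SimpleGraph V)
    (w : Sym2 V → Bool) : Finset (Sym2 V) :=
  Finset.univ.filter fun e => e ∈ G.edgeSet ∧ w e = false

theorem fcMove_false_of {V : Type*} {G : SimpleGraph V} {w : Sym2 V → Bool} {v : V}
    {e : Sym2 V} (h : fcMove G w v e = false) : w e = false := by
  unfold fcMove at h
  split_ifs at h <;> simp_all

theorem falseEdges_fcMove_lt {V : Type*} [Fintype V] [DecidableEq V]
    {G : SimpleGraph V} {S : Finset V} {w : Sym2 V → Bool} {v : V}
    (h : fcFeasible G S w v) :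
    (falseEdges G (fcMove G w v)).card < (falseEdges G w).card := by
  obtain ⟨-, x, hadj, hw⟩ := h
  apply Finset.card_lt_card
  refine (Finset.ssubset_iff_of_subset ?_).mpr ?_
  · intro e he
    simp only [falseEdges, Finset.mem_filter, Finset.mem_univ, true_and] at he ⊢
    exact ⟨he.1, fcMove_false_of he.2⟩
  · refine ⟨s(v, x), ?_, ?_⟩
    · simp [falseEdges, SimpleGraph.mem_edgeSet, hadj, hw]
    · simp [falseEdges, fcMove, SimpleGraph.mem_edgeSet, hadj]

/-- Normal-play outcome for Friend Circle: the position is a first-player win. -/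
def fcFirstWins {V : Type*} [Fintype V] [DecidableEq V] (G : SimpleGraph V)
    (S : Finset V) (w : Sym2 V → Bool) : Prop :=
  ∃ v, ∃ _ : fcFeasible G S w v, ¬ fcFirstWins G S (fcMove G w v)
termination_by (falseEdges G w).card
decreasing_by
  rename_i h
  exact falseEdges_fcMove_lt h

/-- Normal-play outcome for Node-Kayles on `G₀` with remaining (available) vertices `A`:
a move selects `v ∈ A` and removes `v` and all its neighbours from `A`. -/
def nkFirstWins {V₀ : Type*} [Fintype V₀] (G₀ : SimpleGraph V₀) (A : Finset V₀) : Prop :=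
  ∃ v, ∃ _ : v ∈ A, ¬ nkFirstWins G₀ (A \ insert v (Finset.univ.filter (G₀.Adj v)))
termination_by A.card
decreasing_by
  rename_i hv
  apply Finset.card_lt_card
  exact (Finset.ssubset_iff_of_subset Finset.sdiff_subset).mpr ⟨v, hv, by simp⟩

/-- The graph of the reduction from Node-Kayles on `G₀` to Friend Circle: the vertices of
`G₀` (as `Sum.inl`) together with a new vertex `t_v = Sum.inr v` for each `v`, with the
edges of `G₀` together with the edges `(v, t_v)`. -/
def FCgraph {V₀ : Type*} (G₀ : SimpleGraph V₀) : SimpleGraph (V₀ ⊕ V₀) where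
  Adj a b := match a, b with
    | .inl u, .inl v => G₀.Adj u v
    | .inl u, .inr v => u = v
    | .inr u, .inl v => u = v
    | .inr _, .inr _ => False
  symm := by
    constructor
    rintro (u | u) (v | v) h
    · exact G₀.adj_symm h
    · exact h.symm
    · exact h.symm
    · exact h.elim
  loopless := by
    constructor
    rintro (u | u) h
    · exact G₀.irrefl h
    · exact h.elim

/-- The initial labelling of the reduction: the edges of `G₀` are true, the edges
`(v, t_v)` are false. -/
def FCw {V₀ : Type*} : Sym2 (V₀ ⊕ V₀) → Bool :=
  fun e => if ∀ a ∈ e, a.isLeft then true else false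

/-- The labelling corresponding to the Node-Kayles position with available vertex set
`A`: edges of `G₀` are true, and the edge `(v, t_v)` is true exactly when `v ∉ A`. -/
def nkLabel {V₀ : Type*} (A : Finset V₀) : Sym2 (V₀ ⊕ V₀) → Bool :=
  fun e =>
    if (∀ a ∈ e, a.isLeft) ∨ (∃ u, u ∉ A ∧ e = s(Sum.inl u, Sum.inr u)) then true
    else false


section AuxLemmas
variable {V₀ : Type*} [Fintype V₀] [DecidableEq V₀] {G₀ : SimpleGraph V₀}

lemma nkLabel_ll (A : Finset V₀) (u u' : V₀) :
    nkLabel A s(Sum.inl u, Sum.inl u') = true := by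
  unfold nkLabel
  rw [if_pos]
  left
  intro a ha
  rcases Sym2.mem_iff.mp ha with h | h <;> simp [h]

lemma nkLabel_rr (A : Finset V₀) (u u' : V₀) :
    nkLabel A s(Sum.inr u, Sum.inr u') = false := by
  unfold nkLabel
  rw [if_neg]
  rintro (h | ⟨w, hw, he⟩)
  · simpa using h (Sum.inr u) (by simp)
  · simp [Sym2.eq_iff] at he

lemma nkLabel_lr (A : Finset V₀) (u u' : V₀) :
    nkLabel A s(Sum.inl u, Sum.inr u') =
      if u = u' ∧ u ∉ A then true else false := by
  by_cases h : u = u' ∧ u ∉ A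
  · rw [if_pos h]
    unfold nkLabel
    rw [if_pos (Or.inr ⟨u, h.2, by rw [h.1]⟩)]
  · rw [if_neg h]
    unfold nkLabel
    rw [if_neg]
    rintro (hl | ⟨w, hw, he⟩)
    · simpa using hl (Sum.inr u') (by simp)
    · simp only [Sym2.eq_iff] at he
      rcases he with ⟨h1, h2⟩ | ⟨h1, h2⟩
      · obtain ⟨rfl⟩ := Sum.inl.inj h1
        obtain ⟨rfl⟩ := Sum.inr.inj h2
        exact h ⟨rfl, hw⟩
      · exact absurd h1 (by simp)

lemma fcFeasible_inl_iff (A : Finset V₀) (v : V₀) :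
    fcFeasible (FCgraph G₀) (Finset.univ.image Sum.inl) (nkLabel A) (Sum.inl v) ↔ v ∈ A := by
  constructor
  · rintro ⟨-, x, hadj, hw⟩
    match x with
    | .inl u => rw [nkLabel_ll] at hw; exact absurd hw (by simp)
    | .inr u =>
      have huv : v = u := hadj
      subst huv
      rw [nkLabel_lr] at hw
      by_contra hvA
      rw [if_pos ⟨rfl, hvA⟩] at hw
      exact absurd hw (by simp)
  · intro hv
    refine ⟨by simp, Sum.inr v, rfl, ?_⟩
    rw [nkLabel_lr, if_neg (by simp [hv])]

lemma fcFeasible_inr (A : Finset V₀) (v : V₀) :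
    ¬ fcFeasible (FCgraph G₀) (Finset.univ.image Sum.inl) (nkLabel A) (Sum.inr v) := by
  rintro ⟨hmem, -⟩
  simp at hmem

lemma fcMove_nkLabel (A : Finset V₀) (v : V₀) (hv : v ∈ A) :
    fcMove (FCgraph G₀) (nkLabel A) (Sum.inl v)
      = nkLabel (A \ insert v (Finset.univ.filter (G₀.Adj v))) := by
  set A' := A \ insert v (Finset.univ.filter (G₀.Adj v)) with hA'
  have hmemA' : ∀ u, u ∈ A' ↔ u ∈ A ∧ ¬ (u = v ∨ G₀.Adj v u) := by
    intro u
    simp [hA', not_or]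
  have key : ∀ u u' : V₀,
      fcMove (FCgraph G₀) (nkLabel A) (Sum.inl v) s(Sum.inl u, Sum.inr u')
        = nkLabel A' s(Sum.inl u, Sum.inr u') := by
    intro u u'
    by_cases huu : u = u'
    · subst huu
      by_cases hc : v = u ∨ G₀.Adj v u
      · -- move makes this edge true; and u ∉ A'
        have h1 : fcMove (FCgraph G₀) (nkLabel A) (Sum.inl v) s(Sum.inl u, Sum.inr u) = true := by
          unfold fcMove
          rw [if_pos]
          refine ⟨by simp [SimpleGraph.mem_edgeSet, FCgraph], ?_⟩
          rcases hc with rfl | hadj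
          · exact Or.inl (by simp)
          · exact Or.inr ⟨Sum.inl u, by simp, hadj, nkLabel_ll A v u⟩
        have h2 : u ∉ A' := by
          rw [hmemA']
          rintro ⟨-, h⟩
          rcases hc with rfl | hadj
          · exact h (Or.inl rfl)
          · exact h (Or.inr hadj)
        rw [h1, nkLabel_lr, if_pos ⟨rfl, h2⟩]
      · -- edge unchanged, and u ∈ A' ↔ u ∈ A
        have h1 : fcMove (FCgraph G₀) (nkLabel A) (Sum.inl v) s(Sum.inl u, Sum.inr u)
            = nkLabel A s(Sum.inl u, Sum.inr u) := by
          unfold fcMove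
          rw [if_neg]
          rintro ⟨-, hin | ⟨x, hx, hadj, -⟩⟩
          · rcases Sym2.mem_iff.mp hin with h | h
            · exact hc (Or.inl (Sum.inl.inj h))
            · exact absurd h (by simp)
          · rcases Sym2.mem_iff.mp hx with rfl | rfl
            · exact hc (Or.inr hadj)
            · exact hc (Or.inl hadj)
        have h2 : (u ∈ A') ↔ (u ∈ A) := by
          rw [hmemA']
          have hno : ¬ (u = v ∨ G₀.Adj v u) := by
            rintro (rfl | hadj)
            · exact hc (Or.inl rfl)
            · exact hc (Or.inr hadj)
          tauto
        rw [h1, nkLabel_lr, nkLabel_lr]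
        by_cases hu : u ∈ A
        · rw [if_neg (by simp [hu]), if_neg (by simp [h2.mpr hu])]
        · rw [if_pos ⟨rfl, hu⟩, if_pos ⟨rfl, fun h => hu (h2.mp h)⟩]
    · -- not an edge: unchanged, and both labels false
      have h1 : fcMove (FCgraph G₀) (nkLabel A) (Sum.inl v) s(Sum.inl u, Sum.inr u')
          = nkLabel A s(Sum.inl u, Sum.inr u') := by
        unfold fcMove
        rw [if_neg]
        rintro ⟨he, -⟩
        rw [SimpleGraph.mem_edgeSet] at he
        exact huu he
      rw [h1, nkLabel_lr, nkLabel_lr, if_neg (by tauto), if_neg (by tauto)]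
  funext e
  induction e using Sym2.ind with
  | _ a b =>
    match a, b with
    | .inl u, .inl u' =>
      have h1 : fcMove (FCgraph G₀) (nkLabel A) (Sum.inl v) s(Sum.inl u, Sum.inl u') = true := by
        unfold fcMove
        split_ifs with h
        · rfl
        · exact nkLabel_ll A u u'
      rw [h1, nkLabel_ll]
    | .inl u, .inr u' => exact key u u'
    | .inr u, .inl u' => rw [Sym2.eq_swap]; exact key u' u
    | .inr u, .inr u' =>
      have h1 : fcMove (FCgraph G₀) (nkLabel A) (Sum.inl v) s(Sum.inr u, Sum.inr u')
          = nkLabel A s(Sum.inr u, Sum.inr u') := by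
        unfold fcMove
        rw [if_neg]
        rintro ⟨he, -⟩
        rw [SimpleGraph.mem_edgeSet] at he
        exact he
      rw [h1, nkLabel_rr, nkLabel_rr]

lemma sdiff_ssubset' (A : Finset V₀) (v : V₀) (hv : v ∈ A) :
    A \ insert v (Finset.univ.filter (G₀.Adj v)) ⊂ A :=
  (Finset.ssubset_iff_of_subset Finset.sdiff_subset).mpr ⟨v, hv, by simp⟩

lemma fc_iff_nk (G₀ : SimpleGraph V₀) (A : Finset V₀) :
    fcFirstWins (FCgraph G₀) (Finset.univ.image Sum.inl) (nkLabel A) ↔ nkFirstWins G₀ A := by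
  induction A using Finset.strongInduction with
  | _ A ih =>
    rw [fcFirstWins, nkFirstWins]
    constructor
    · rintro ⟨w, hf, hn⟩
      match w with
      | .inr v => exact absurd hf (fcFeasible_inr A v)
      | .inl v =>
        have hv : v ∈ A := (fcFeasible_inl_iff A v).mp hf
        refine ⟨v, hv, fun hcon => hn ?_⟩
        rw [fcMove_nkLabel A v hv, ih _ (sdiff_ssubset' A v hv)]
        convert hcon using 2
        all_goals first
          | (ext x; simp)
          | congr!
    · rintro ⟨v, hv, hn⟩
      refine ⟨Sum.inl v, (fcFeasible_inl_iff A v).mpr hv, fun hcon => hn ?_⟩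
      rw [fcMove_nkLabel A v hv, ih _ (sdiff_ssubset' A v hv)] at hcon
      convert hcon using 2
      all_goals first
        | (ext x; simp)
        | congr!

lemma nkLabel_univ : nkLabel (Finset.univ : Finset V₀) = FCw := by
  funext e
  unfold nkLabel FCw
  congr 1
  simp

end AuxLemmas

/-- Node-Kayles on `G₀` is isomorphic, via the move correspondence
`v ↔ v` (i.e. `v ↔ Sum.inl v`), to Friend Circle on the constructed position
`(FCgraph G₀, S = V₀, FCw)`: under the state correspondence `A ↔ nkLabel A` (with the
initial position `Finset.univ ↔ FCw`), a vertex `v` is a feasible Node-Kayles move iff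
`Sum.inl v` is a feasible Friend Circle move (and no other Friend Circle move is
feasible), and the two move operations commute with the correspondence; in particular the
first player wins Friend Circle on `(FCgraph G₀, V₀, FCw)` iff the first player wins
Node-Kayles on `G₀`. -/
theorem stmt8 {V₀ : Type*} [Fintype V₀] [DecidableEq V₀] (G₀ : SimpleGraph V₀) :
    nkLabel (Finset.univ : Finset V₀) = FCw ∧
    (∀ (A : Finset V₀) (v : V₀),
      fcFeasible (FCgraph G₀) (Finset.univ.image Sum.inl) (nkLabel A) (Sum.inl v) ↔ v ∈ A) ∧
    (∀ (A : Finset V₀) (v : V₀),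
      ¬ fcFeasible (FCgraph G₀) (Finset.univ.image Sum.inl) (nkLabel A) (Sum.inr v)) ∧
    (∀ (A : Finset V₀) (v : V₀), v ∈ A →
      fcMove (FCgraph G₀) (nkLabel A) (Sum.inl v)
        = nkLabel (A \ insert v (Finset.univ.filter (G₀.Adj v)))) ∧
    (fcFirstWins (FCgraph G₀) (Finset.univ.image Sum.inl) FCw ↔
      nkFirstWins G₀ Finset.univ) := by
  refine ⟨nkLabel_univ, fcFeasible_inl_iff, fcFeasible_inr, fcMove_nkLabel, ?_⟩
  rw [← nkLabel_univ]
  exact fc_iff_nk G₀ Finset.univ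


end TW
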